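/- If a unitary U on n qubits conjugates every Pauli string to a scalar multiple of a Pauli string (i.e., U is a Clifford unitary), and U commutes with the total charge operator Z_1 + Z_2 + ... + Z_n, then for each site i there exists a site j and a sign s ∈ {+1, -1} such that U Z_i U† = s · Z_j; moreover, summing over i forces the map i ↦ j to be a permutation with all signs s = +1, so U Z_i U† = Z_{σ(i)} for some permutation σ. -/

import Mathlib

open Matrix

/-- Single-qubit Pauli matrices indexed by `Fin 4`: `0 ↦ I`, `1 ↦ X`, `2 ↦ Y`, `3 ↦ Z`. -/
noncomputable def pauliMat (k : Fin 4) : Matrix (Fin 2) (Fin 2) ℂ :=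
  if k = 0 then 1
  else if k = 1 then !![0, 1; 1, 0]
  else if k = 2 then !![0, -Complex.I; Complex.I, 0]
  else !![1, 0; 0, -1]

/-- A Pauli string on `n` qubits, as a matrix on `(ℂ²)^{⊗n}` realized with index set `Fin n → Fin 2`. -/
noncomputable def pauliString {n : ℕ} (P : Fin n → Fin 4) :
    Matrix (Fin n → Fin 2) (Fin n → Fin 2) ℂ :=
  fun x y => ∏ i, pauliMat (P i) (x i) (y i)

/-- The Pauli `Z` operator on qubit `i` (identity elsewhere). -/
noncomputable def Zop {n : ℕ} (i : Fin n) :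
    Matrix (Fin n → Fin 2) (Fin n → Fin 2) ℂ :=
  pauliString (fun j => if j = i then 3 else 0)

/-! ### Auxiliary lemmas -/

lemma pauliMat_mul_self (k : Fin 4) : pauliMat k * pauliMat k = 1 := by
  fin_cases k <;>
  · ext i j
    fin_cases i <;> fin_cases j <;>
      norm_num (config := {decide := true}) [pauliMat, Matrix.mul_apply, Fin.sum_univ_two, Complex.ext_iff,
        Matrix.one_apply]

lemma pauliMat_pairing (a b : Fin 4) :
    Matrix.trace (pauliMat a * pauliMat b) = if a = b then 2 else 0 := by
  fin_cases a <;> fin_cases b <;>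
    norm_num (config := {decide := true}) [pauliMat, Matrix.trace, Matrix.diag, Matrix.mul_apply,
      Fin.sum_univ_two, Complex.ext_iff, Matrix.one_apply]

lemma pauliString_mul {n : ℕ} (P Q : Fin n → Fin 4) :
    pauliString P * pauliString Q =
      fun x y => ∏ i, (pauliMat (P i) * pauliMat (Q i)) (x i) (y i) := by
  funext x y
  show ∑ z, pauliString P x z * pauliString Q z y = _
  simp only [pauliString, Matrix.mul_apply, ← Finset.prod_mul_distrib]
  rw [Finset.prod_univ_sum]
  rw [Fintype.piFinset_univ]

lemma pauliString_mul_self {n : ℕ} (P : Fin n → Fin 4) :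
    pauliString P * pauliString P = 1 := by
  rw [pauliString_mul]
  funext x y
  simp only [pauliMat_mul_self, Matrix.one_apply]
  rw [Finset.prod_boole]
  simp [funext_iff]

lemma trace_pauliString_mul {n : ℕ} (P Q : Fin n → Fin 4) :
    Matrix.trace (pauliString P * pauliString Q) = if P = Q then (2:ℂ)^n else 0 := by
  rw [pauliString_mul]
  have h1 : Matrix.trace (fun x y => ∏ i, (pauliMat (P i) * pauliMat (Q i)) (x i) (y i)
      : Matrix (Fin n → Fin 2) (Fin n → Fin 2) ℂ)
      = ∏ i, ∑ a, (pauliMat (P i) * pauliMat (Q i)) a a := by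
    rw [Finset.prod_univ_sum, Fintype.piFinset_univ]
    rfl
  rw [h1]
  have h2 : ∀ i, ∑ a, (pauliMat (P i) * pauliMat (Q i)) a a
      = if P i = Q i then (2:ℂ) else 0 := fun i => pauliMat_pairing (P i) (Q i)
  simp only [h2]
  by_cases h : P = Q
  · simp [h, Finset.prod_const]
  · obtain ⟨i, hi⟩ := Function.ne_iff.mp h
    rw [if_neg h]
    apply Finset.prod_eq_zero (Finset.mem_univ i)
    exact if_neg hi

/-- The Pauli word of `Zop i`. -/
def Zstr {n : ℕ} (i : Fin n) : Fin n → Fin 4 := fun j => if j = i then 3 else 0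

lemma Zop_eq {n : ℕ} (i : Fin n) : Zop i = pauliString (Zstr i) := rfl

lemma Zstr_injective {n : ℕ} : Function.Injective (Zstr (n := n)) := by
  intro i k h
  by_contra hik
  have h' := congrFun h i
  simp only [Zstr, if_pos rfl] at h'
  rw [if_neg (fun hh : i = k => hik hh)] at h'
  exact absurd h' (by decide)

/-- A Clifford unitary commuting with the total charge `∑ i, Z_i` conjugates each `Z_i` to
`± Z_j`, and in fact to `Z_{σ(i)}` for a permutation `σ` (all signs `+1`). -/
theorem stmt0 {n : ℕ} (U : Matrix (Fin n → Fin 2) (Fin n → Fin 2) ℂ)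
    (hU : U * Uᴴ = 1 ∧ Uᴴ * U = 1)
    (hClifford : ∀ P : Fin n → Fin 4, ∃ (c : ℂ) (Q : Fin n → Fin 4),
      U * pauliString P * Uᴴ = c • pauliString Q)
    (hU1 : U * (∑ i, Zop i) * Uᴴ = ∑ i, Zop i) :
    (∀ i : Fin n, ∃ (j : Fin n) (s : ℂ), (s = 1 ∨ s = -1) ∧
      U * Zop i * Uᴴ = s • Zop j) ∧
    ∃ σ : Equiv.Perm (Fin n), ∀ i, U * Zop i * Uᴴ = Zop (σ i) := by
  obtain ⟨h1, h2⟩ := hU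
  have h2n : (2:ℂ)^n ≠ 0 := pow_ne_zero n two_ne_zero
  choose c Q hQ using fun i => hClifford (Zstr i)
  have hconj : ∀ A : Matrix (Fin n → Fin 2) (Fin n → Fin 2) ℂ,
      Uᴴ * (U * A * Uᴴ) * U = A := by
    intro A
    have e : Uᴴ * (U * A * Uᴴ) * U = Uᴴ * (U * (A * (Uᴴ * U))) := by
      simp only [Matrix.mul_assoc]
    rw [e, h2, Matrix.mul_one, ← Matrix.mul_assoc, h2, Matrix.one_mul]
  -- each coefficient squares to 1
  have hsq : ∀ i, c i * c i = 1 := by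
    intro i
    have hA : (U * pauliString (Zstr i) * Uᴴ) * (U * pauliString (Zstr i) * Uᴴ) = 1 := by
      have e : (U * pauliString (Zstr i) * Uᴴ) * (U * pauliString (Zstr i) * Uᴴ)
          = U * (pauliString (Zstr i) * ((Uᴴ * U) * (pauliString (Zstr i) * Uᴴ))) := by
        simp only [Matrix.mul_assoc]
      rw [e, h2, Matrix.one_mul, ← Matrix.mul_assoc (pauliString (Zstr i)),
        pauliString_mul_self, Matrix.one_mul, h1]
    rw [hQ i] at hA
    have e3 : (c i • pauliString (Q i)) * (c i • pauliString (Q i))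
        = (c i * c i) • (1 : Matrix (Fin n → Fin 2) (Fin n → Fin 2) ℂ) := by
      rw [Matrix.smul_mul, Matrix.mul_smul, smul_smul, pauliString_mul_self]
    have h3 := e3.symm.trans hA
    have h0 := congrFun (congrFun h3 (fun _ => 0)) (fun _ => 0)
    simpa [Matrix.one_apply] using h0
  have hcne : ∀ i, c i ≠ 0 := by
    intro i h
    have := hsq i
    rw [h, mul_zero] at this
    exact zero_ne_one this
  -- invert the conjugation
  have hinv : ∀ i, pauliString (Zstr i) = c i • (Uᴴ * pauliString (Q i) * U) := by
    intro i
    have h3 := hconj (pauliString (Zstr i))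
    rw [hQ i] at h3
    rw [← h3, Matrix.mul_smul, Matrix.smul_mul]
  -- the words Q i are pairwise distinct
  have hQinj : Function.Injective Q := by
    intro i k h
    by_contra hik
    have e1 : c k • pauliString (Zstr i) = c i • pauliString (Zstr k) := by
      rw [hinv i, hinv k, h, smul_smul, smul_smul, mul_comm]
    have e2 := congrArg (fun M => Matrix.trace (M * pauliString (Zstr i))) e1
    simp only [Matrix.smul_mul, Matrix.trace_smul, trace_pauliString_mul, smul_eq_mul] at e2
    rw [if_true, if_neg (fun hh => hik (Zstr_injective hh).symm), mul_zero] at e2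
    rcases mul_eq_zero.mp e2 with h' | h'
    · exact hcne k h'
    · exact h2n h'
  -- the conjugated sum equation
  have hsum : (∑ i, c i • pauliString (Q i)) = ∑ j, pauliString (Zstr j) := by
    have e : U * (∑ i, Zop i) * Uᴴ = ∑ i, c i • pauliString (Q i) := by
      rw [Finset.mul_sum, Finset.sum_mul]
      exact Finset.sum_congr rfl fun i _ => hQ i
    rw [← e, hU1]
    rfl
  -- extract: each Q k is some Zstr j with coefficient 1
  have key : ∀ k, ∃ j, Q k = Zstr j ∧ c k = 1 := by
    intro k
    have ht := congrArg (fun M => Matrix.trace (M * pauliString (Q k))) hsum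
    simp only [Finset.sum_mul, Matrix.smul_mul, Matrix.trace_sum, Matrix.trace_smul,
      trace_pauliString_mul, smul_eq_mul] at ht
    have hL : ∑ i, c i * (if Q i = Q k then (2:ℂ)^n else 0) = c k * 2^n := by
      rw [Finset.sum_eq_single k]
      · rw [if_pos rfl]
      · intro i _ hiK
        rw [if_neg (fun hh => hiK (hQinj hh)), mul_zero]
      · intro h
        exact absurd (Finset.mem_univ k) h
    rw [hL] at ht
    by_cases hex : ∃ j, Zstr j = Q k
    · obtain ⟨j0, hj0⟩ := hex
      have hR : ∑ j, (if Zstr j = Q k then (2:ℂ)^n else 0) = 2^n := by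
        rw [Finset.sum_eq_single j0]
        · rw [if_pos hj0]
        · intro j _ hj
          rw [if_neg (fun hh => hj (Zstr_injective (hh.trans hj0.symm)))]
        · intro h
          exact absurd (Finset.mem_univ j0) h
      rw [hR] at ht
      exact ⟨j0, hj0.symm, mul_right_cancel₀ h2n (ht.trans (one_mul _).symm)⟩
    · have hR : ∑ j, (if Zstr j = Q k then (2:ℂ)^n else 0) = 0 := by
        apply Finset.sum_eq_zero
        intro j _
        rw [if_neg (fun hh => hex ⟨j, hh⟩)]
      rw [hR] at ht
      rcases mul_eq_zero.mp ht with h' | h'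
      · exact absurd h' (hcne k)
      · exact absurd h' h2n
  choose τ hτ1 hτ2 using key
  have hfinal : ∀ i, U * Zop i * Uᴴ = Zop (τ i) := by
    intro i
    rw [Zop_eq i, hQ i, hτ2 i, one_smul, hτ1 i, Zop_eq]
  have hτinj : Function.Injective τ := by
    intro i k h
    apply hQinj
    rw [hτ1 i, hτ1 k, h]
  refine ⟨fun i => ⟨τ i, 1, Or.inl rfl, by rw [hfinal i, one_smul]⟩, ?_⟩
  exact ⟨Equiv.ofBijective τ (Finite.injective_iff_bijective.mp hτinj),
    fun i => by rw [hfinal i]; rfl⟩
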